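/- Assume each Y_i (0 ≤ i ≤ n) is a compact Polish space and each X_i is a Polish space, and let P = (p_i) be a feedback family satisfying condition (CA). Let Q^α (α = 1,2,…) be forward families such that the joint measures ←P⊗→Q^α converge weakly to a Borel probability measure π⁰ on X_{0,n} × Y_{0,n}. Then there exists a forward family Q⁰ such that π⁰ = ←P⊗→Q⁰; in particular, the limiting joint measure has the same feedback family: for each 0 ≤ i ≤ n, the conditional distribution under π⁰ of the coordinate x_i given the past coordinates (x^{i-1}, y^{i-1}) equals p_i(·; x^{i-1}, y^{i-1}) for π⁰-almost every (x^{i-1}, y^{i-1}). -/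

import Mathlib

open MeasureTheory ProbabilityTheory Filter
open scoped ENNReal NNReal

namespace PaperDI

lemma measurable_finSnoc {Z : ℕ → Type*} [∀ i, MeasurableSpace (Z i)] (k : ℕ) :
    Measurable (fun p : (∀ j : Fin k, Z j) × Z k =>
      (Fin.snoc p.1 p.2 : ∀ j : Fin (k + 1), Z j)) := by
  apply measurable_pi_lambda
  intro j
  induction j using Fin.lastCases with
  | last => simpa using measurable_snd
  | cast i =>
    simp
    exact (measurable_pi_apply i).comp measurable_fst

/-- Restriction of a prefix of length `k+1` to the prefix of length `k`. -/
def restr {Z : ℕ → Type*} (k : ℕ) (z : ∀ j : Fin (k + 1), Z j) : ∀ j : Fin k, Z j :=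
  fun j => z j.castSucc

lemma measurable_restr {Z : ℕ → Type*} [∀ i, MeasurableSpace (Z i)] (k : ℕ) :
    Measurable (restr (Z := Z) k) :=
  measurable_pi_lambda _ fun _ => measurable_pi_apply _

variable (X Y : ℕ → Type*) [∀ i, MeasurableSpace (X i)] [∀ i, MeasurableSpace (Y i)]

/-- A feedback family `(p_0, …, p_n)`: `p_0` is a probability measure on `X_0` (a Markov
kernel from the one-point space of empty prefixes) and `p_i` is a Markov kernel from
`X_{0,i-1} × Y_{0,i-1}` to `X_i`. -/
structure FeedbackFamily (n : ℕ) where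
  p : ∀ i : Fin (n + 1), Kernel ((∀ j : Fin (i : ℕ), X j) × (∀ j : Fin (i : ℕ), Y j)) (X i)
  markov : ∀ i, IsMarkovKernel (p i)

/-- A forward family `(q_0, …, q_n)`: `q_i` is a Markov kernel from
`Y_{0,i-1} × X_{0,i}` to `Y_i`. -/
structure ForwardFamily (n : ℕ) where
  q : ∀ i : Fin (n + 1), Kernel ((∀ j : Fin (i : ℕ), Y j) × (∀ j : Fin ((i : ℕ) + 1), X j)) (Y i)
  markov : ∀ i, IsMarkovKernel (q i)

variable {X Y} {n : ℕ}

/-- The causally conditioned kernel `←P_{0,k}` from `Y_{0,k-1}` to `X_{0,k}`. -/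
noncomputable def back (P : FeedbackFamily X Y n) :
    (k : ℕ) → k ≤ n → Kernel (∀ j : Fin k, Y j) (∀ j : Fin (k + 1), X j)
  | 0, _ =>
      Kernel.map ((P.p ⟨0, Nat.succ_pos n⟩).comap (fun _ => default) measurable_const)
        (fun x0 => (Fin.snoc default x0 : ∀ j : Fin 1, X j))
  | (k + 1), h =>
      Kernel.map
        (((back P k (by omega)).comap (restr k) (measurable_restr k)) ⊗ₖ
          ((P.p ⟨k + 1, by omega⟩).comap
            (fun t : (∀ j : Fin (k + 1), Y j) × (∀ j : Fin (k + 1), X j) => (t.2, t.1))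
            (measurable_snd.prodMk measurable_fst)))
        (fun t : (∀ j : Fin (k + 1), X j) × X (k + 1) =>
          (Fin.snoc t.1 t.2 : ∀ j : Fin (k + 2), X j))

/-- The causally conditioned kernel `→Q_{0,k}` from `X_{0,k}` to `Y_{0,k}`. -/
noncomputable def fwd (Q : ForwardFamily X Y n) :
    (k : ℕ) → k ≤ n → Kernel (∀ j : Fin (k + 1), X j) (∀ j : Fin (k + 1), Y j)
  | 0, _ =>
      Kernel.map ((Q.q ⟨0, Nat.succ_pos n⟩).comap (fun x => (default, x))
          (measurable_const.prodMk measurable_id))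
        (fun y0 => (Fin.snoc default y0 : ∀ j : Fin 1, Y j))
  | (k + 1), h =>
      Kernel.map
        (((fwd Q k (by omega)).comap (restr (k + 1)) (measurable_restr (k + 1))) ⊗ₖ
          ((Q.q ⟨k + 1, by omega⟩).comap
            (fun t : (∀ j : Fin (k + 2), X j) × (∀ j : Fin (k + 1), Y j) => (t.2, t.1))
            (measurable_snd.prodMk measurable_fst)))
        (fun t : (∀ j : Fin (k + 1), Y j) × Y (k + 1) =>
          (Fin.snoc t.1 t.2 : ∀ j : Fin (k + 2), Y j))

/-- The interleaved joint measure of `←P ⊗ →Q` on prefixes of length `k`. -/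
noncomputable def jointAux (P : FeedbackFamily X Y n) (Q : ForwardFamily X Y n) :
    (k : ℕ) → k ≤ n + 1 → Measure ((∀ j : Fin k, X j) × (∀ j : Fin k, Y j))
  | 0, _ => Measure.dirac default
  | (k + 1), h =>
      let μ1 := (jointAux P Q k (by omega)) ⊗ₘ (P.p ⟨k, by omega⟩)
      let μ2 := μ1.map
          (fun t : ((∀ j : Fin k, X j) × (∀ j : Fin k, Y j)) × X k =>
            (t.1.2, (Fin.snoc t.1.1 t.2 : ∀ j : Fin (k + 1), X j)))
      let μ3 := μ2 ⊗ₘ (Q.q ⟨k, by omega⟩)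
      μ3.map
          (fun t : ((∀ j : Fin k, Y j) × (∀ j : Fin (k + 1), X j)) × Y k =>
            (t.1.2, (Fin.snoc t.1.1 t.2 : ∀ j : Fin (k + 1), Y j)))

/-- The joint measure `←P ⊗ →Q` on `X_{0,n} × Y_{0,n}`. -/
noncomputable def joint (P : FeedbackFamily X Y n) (Q : ForwardFamily X Y n) :
    Measure ((∀ j : Fin (n + 1), X j) × (∀ j : Fin (n + 1), Y j)) :=
  jointAux P Q (n + 1) le_rfl

/-- The marginal `ν_{0,n}` of `←P ⊗ →Q` on `Y_{0,n}`. -/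
noncomputable def nu (P : FeedbackFamily X Y n) (Q : ForwardFamily X Y n) :
    Measure (∀ j : Fin (n + 1), Y j) :=
  (joint P Q).map Prod.snd

/-- The measure `←P ⊗ λ` on `X_{0,n} × Y_{0,n}`, i.e. the measure
`←P_{0,n}(dx^n | y^{n-1}) ⊗ λ(dy^n)`. -/
noncomputable def backProd (P : FeedbackFamily X Y n) (lam : Measure (∀ j : Fin (n + 1), Y j)) :
    Measure ((∀ j : Fin (n + 1), X j) × (∀ j : Fin (n + 1), Y j)) :=
  (lam ⊗ₘ ((back P n le_rfl).comap (restr n) (measurable_restr n))).map Prod.swap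

open Classical in
/-- Kullback-Leibler divergence (relative entropy) `D(μ ‖ ν)`, with the convention
`D(μ ‖ ν) = ∞` when absolute continuity fails. -/
noncomputable def KL {Z : Type*} [MeasurableSpace Z] (μ ν : Measure Z) : ℝ≥0∞ :=
  if μ ≪ ν ∧ Integrable (llr μ ν) μ then ENNReal.ofReal (∫ z, llr μ ν z ∂μ) else ⊤

/-- Directed information `I(←P, →Q) = D(←P ⊗ →Q ‖ ←P ⊗ ν_{0,n})`. -/
noncomputable def DI (P : FeedbackFamily X Y n) (Q : ForwardFamily X Y n) : ℝ≥0∞ :=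
  KL (joint P Q) (backProd P (nu P Q))

/-- Weak convergence of a sequence of measures: integrals of every bounded continuous
real-valued function converge. -/
def WeakTendsto {Z : Type*} [MeasurableSpace Z] [TopologicalSpace Z]
    (μ : ℕ → Measure Z) (μ0 : Measure Z) : Prop :=
  ∀ f : BoundedContinuousFunction Z ℝ,
    Tendsto (fun α => ∫ z, f z ∂(μ α)) atTop (nhds (∫ z, f z ∂μ0))

/-- Uniform tightness of a family of measures. -/
def UniformlyTight {Z : Type*} [MeasurableSpace Z] [TopologicalSpace Z]
    (M : Set (Measure Z)) : Prop :=
  ∀ ε : ℝ≥0∞, 0 < ε → ∃ K : Set Z, IsCompact K ∧ ∀ μ ∈ M, 1 - ε ≤ μ K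

/-- The marginal `π_i` of `←P ⊗ →Q` on `X_{0,i} × Y_{0,i-1}`. -/
noncomputable def margin (P : FeedbackFamily X Y n) (Q : ForwardFamily X Y n) (i : Fin (n + 1)) :
    Measure ((∀ j : Fin ((i : ℕ) + 1), X j) × (∀ j : Fin (i : ℕ), Y j)) :=
  (joint P Q).map (fun t =>
    ((fun j : Fin ((i : ℕ) + 1) => t.1 (Fin.castLE i.isLt j)),
     (fun j : Fin (i : ℕ) => t.2 (Fin.castLE i.isLt.le j))))

/-- The iterated product measure of a tuple of kernels `(λ_0, …, λ_n)`,
`λ_i : Y_{0,i-1} → Y_i`, on prefixes of length `k`. -/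
noncomputable def chain {Z : ℕ → Type*} [∀ i, MeasurableSpace (Z i)] {n : ℕ}
    (lam : ∀ i : Fin (n + 1), Kernel (∀ j : Fin (i : ℕ), Z j) (Z i)) :
    (k : ℕ) → k ≤ n + 1 → Measure (∀ j : Fin k, Z j)
  | 0, _ => Measure.dirac default
  | (k + 1), h =>
      ((chain lam k (by omega)) ⊗ₘ (lam ⟨k, by omega⟩)).map
        (fun t : (∀ j : Fin k, Z j) × Z k => (Fin.snoc t.1 t.2 : ∀ j : Fin (k + 1), Z j))

/-- The joint measure `←S ⊗ →R` on `X_{0,n} × Y_{0,n}` determined by a reversed pair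
`(S, R)`; a reversed pair is formally a feedback family and a forward family with the
roles of `X` and `Y` interchanged. -/
noncomputable def revJoint (S : FeedbackFamily Y X n) (R : ForwardFamily Y X n) :
    Measure ((∀ j : Fin (n + 1), X j) × (∀ j : Fin (n + 1), Y j)) :=
  (joint S R).map Prod.swap

/-- `∫ log(dσ/dπ) dμ`, as an extended real number (integral of the positive part minus
integral of the negative part). -/
noncomputable def elogInt {Z : Type*} [MeasurableSpace Z] (σ π μ : Measure Z) : EReal :=
  ((∫⁻ z, ENNReal.ofReal (llr σ π z) ∂μ : ℝ≥0∞) : EReal) -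
    ((∫⁻ z, ENNReal.ofReal (-llr σ π z) ∂μ : ℝ≥0∞) : EReal)

/-- `∫ |log(dμ/dν)| dμ`. -/
noncomputable def absKL {Z : Type*} [MeasurableSpace Z] (μ ν : Measure Z) : ℝ≥0∞ :=
  ∫⁻ z, ENNReal.ofReal |llr μ ν z| ∂μ

section Topology

variable [∀ i, TopologicalSpace (X i)] [∀ i, TopologicalSpace (Y i)]

/-- Condition (CA): each `p_i` is weakly (Feller) continuous in the conditioning
variables `(x^{i-1}, y^{i-1})`. -/
def CondCA (P : FeedbackFamily X Y n) : Prop :=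
  ∀ (i : Fin (n + 1)) (g : BoundedContinuousFunction (X i) ℝ),
    Continuous (fun t : (∀ j : Fin (i : ℕ), X j) × (∀ j : Fin (i : ℕ), Y j) =>
      ∫ x, g x ∂(P.p i t))

/-- Condition (CB): each `q_i` is weakly (Feller) continuous in the conditioning
variables `(x^i, y^{i-1})`. -/
def CondCB (Q : ForwardFamily X Y n) : Prop :=
  ∀ (i : Fin (n + 1)) (g : BoundedContinuousFunction (Y i) ℝ),
    Continuous (fun t : (∀ j : Fin ((i : ℕ) + 1), X j) × (∀ j : Fin (i : ℕ), Y j) =>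
      ∫ y, g y ∂(Q.q i (t.2, t.1)))

end Topology



lemma continuous_restr {Z : ℕ → Type*} [∀ i, TopologicalSpace (Z i)] (k : ℕ) :
    Continuous (restr (Z := Z) k) :=
  continuous_pi fun _ => continuous_apply _

/-- General prefix restriction. -/
def rpi {Z : ℕ → Type*} (m k : ℕ) (h : k ≤ m) (z : ∀ j : Fin m, Z j) : ∀ j : Fin k, Z j :=
  fun j => z (Fin.castLE h j)

lemma measurable_rpi {Z : ℕ → Type*} [∀ i, MeasurableSpace (Z i)] (m k : ℕ) (h : k ≤ m) :
    Measurable (rpi (Z := Z) m k h) :=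
  measurable_pi_lambda _ fun _ => measurable_pi_apply _

lemma continuous_rpi {Z : ℕ → Type*} [∀ i, TopologicalSpace (Z i)] (m k : ℕ) (h : k ≤ m) :
    Continuous (rpi (Z := Z) m k h) :=
  continuous_pi fun _ => continuous_apply _

lemma rpi_self {Z : ℕ → Type*} (m : ℕ) (h : m ≤ m) (z : ∀ j : Fin m, Z j) :
    rpi m m h z = z := rfl

lemma rpi_succ {Z : ℕ → Type*} (k : ℕ) (h : k ≤ k + 1) (z : ∀ j : Fin (k + 1), Z j) :
    rpi (k + 1) k h z = restr k z := rfl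

lemma rpi_trans {Z : ℕ → Type*} {m k l : ℕ} (h1 : l ≤ k) (h2 : k ≤ m) (z : ∀ j : Fin m, Z j) :
    rpi k l h1 (rpi m k h2 z) = rpi m l (h1.trans h2) z := rfl

lemma restr_snoc {Z : ℕ → Type*} (k : ℕ) (a : ∀ j : Fin k, Z j) (b : Z k) :
    restr k (Fin.snoc a b : ∀ j : Fin (k + 1), Z j) = a :=
  funext fun j => by simp [restr]

lemma snoc_restr {Z : ℕ → Type*} (k : ℕ) (z : ∀ j : Fin (k + 1), Z j) :
    (Fin.snoc (restr k z) (z (Fin.last k)) : ∀ j : Fin (k + 1), Z j) = z := by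
  funext j
  induction j using Fin.lastCases with
  | last => simp
  | cast i => simp [restr]

lemma measure_eq_of_subsingleton {A : Type*} [MeasurableSpace A] [Subsingleton A]
    (μ ν : Measure A) (h : μ Set.univ = ν Set.univ) : μ = ν := by
  ext s hs
  rcases Set.eq_empty_or_nonempty s with rfl | ⟨a, ha⟩
  · simp
  · have hsu : s = Set.univ := Set.eq_univ_of_forall fun b => (Subsingleton.elim a b) ▸ ha
    rw [hsu, h]

/-- Real-valued version of an `ℝ≥0`-valued bounded continuous function. -/
noncomputable def toRealBCF {A : Type*} [TopologicalSpace A]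
    (F : BoundedContinuousFunction A ℝ≥0) : BoundedContinuousFunction A ℝ :=
  BoundedContinuousFunction.ofNormedAddCommGroup (fun a => (F a : ℝ))
    (NNReal.continuous_coe.comp F.continuous) (nndist 0 F)
    (fun a => by
      rw [Real.norm_of_nonneg (F a).coe_nonneg]
      exact_mod_cast F.apply_le_nndist_zero a)

@[simp] lemma toRealBCF_apply {A : Type*} [TopologicalSpace A]
    (F : BoundedContinuousFunction A ℝ≥0) (a : A) : toRealBCF F a = (F a : ℝ) := rfl

lemma ext_prod_bcf {A B : Type*}
    [MeasurableSpace A] [TopologicalSpace A] [BorelSpace A] [PolishSpace A]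
    [MeasurableSpace B] [TopologicalSpace B] [BorelSpace B] [PolishSpace B]
    (μ ν : Measure (A × B)) [IsFiniteMeasure μ] [IsFiniteMeasure ν]
    (h : ∀ (f : BoundedContinuousFunction A ℝ) (g : BoundedContinuousFunction B ℝ),
      ∫ p, f p.1 * g p.2 ∂μ = ∫ p, f p.1 * g p.2 ∂ν) :
    μ = ν := by
  have base : ∀ (F : BoundedContinuousFunction A ℝ≥0) (G : BoundedContinuousFunction B ℝ≥0),
      ∫⁻ p, (F p.1 : ℝ≥0∞) * (G p.2 : ℝ≥0∞) ∂μ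
        = ∫⁻ p, (F p.1 : ℝ≥0∞) * (G p.2 : ℝ≥0∞) ∂ν := by
    intro F G
    have key : ∀ (ρ : Measure (A × B)), IsFiniteMeasure ρ →
        ∫⁻ p, (F p.1 : ℝ≥0∞) * (G p.2 : ℝ≥0∞) ∂ρ
          = ENNReal.ofReal (∫ p, (toRealBCF F) p.1 * (toRealBCF G) p.2 ∂ρ) := by
      intro ρ hρ
      have hH : (⇑((toRealBCF F).compContinuous (⟨Prod.fst, continuous_fst⟩ : C(A × B, A)) *
          (toRealBCF G).compContinuous (⟨Prod.snd, continuous_snd⟩ : C(A × B, B))))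
          = fun p : A × B => (toRealBCF F) p.1 * (toRealBCF G) p.2 := by
        ext p; simp [BoundedContinuousFunction.compContinuous_apply]
      have hint : Integrable (fun p : A × B => (toRealBCF F) p.1 * (toRealBCF G) p.2) ρ := by
        rw [← hH]; exact BoundedContinuousFunction.integrable ρ _
      rw [ofReal_integral_eq_lintegral_ofReal hint
        (Eventually.of_forall fun p => mul_nonneg (F p.1).coe_nonneg (G p.2).coe_nonneg)]
      apply lintegral_congr
      intro p
      simp only [toRealBCF_apply]
      rw [ENNReal.ofReal_mul (F p.1).coe_nonneg, ENNReal.ofReal_coe_nnreal,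
        ENNReal.ofReal_coe_nnreal]
    rw [key μ ‹_›, key ν ‹_›, h (toRealBCF F) (toRealBCF G)]
  have hrect : ∀ S : Set A, MeasurableSet S → ∀ T : Set B, MeasurableSet T →
      μ (S ×ˢ T) = ν (S ×ˢ T) := by
    intro S hS T hT
    have stepA : ∀ G : BoundedContinuousFunction B ℝ≥0,
        ∫⁻ p in S ×ˢ (Set.univ : Set B), (G p.2 : ℝ≥0∞) ∂μ
          = ∫⁻ p in S ×ˢ (Set.univ : Set B), (G p.2 : ℝ≥0∞) ∂ν := by
      intro G
      have hGmeas : Measurable fun p : A × B => (G p.2 : ℝ≥0∞) :=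
        measurable_coe_nnreal_ennreal.comp (G.continuous.measurable.comp measurable_snd)
      have hfin : ∀ ρ : Measure (A × B), IsFiniteMeasure ρ →
          IsFiniteMeasure (ρ.withDensity fun p => (G p.2 : ℝ≥0∞)) := by
        intro ρ hρ
        refine isFiniteMeasure_withDensity (ne_of_lt ?_)
        exact BoundedContinuousFunction.lintegral_lt_top_of_nnreal ρ
          (G.compContinuous (⟨Prod.snd, continuous_snd⟩ : C(A × B, B)))
      haveI := hfin μ ‹_›
      haveI := hfin ν ‹_›
      have hmapeq : (μ.withDensity fun p => (G p.2 : ℝ≥0∞)).map Prod.fst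
          = (ν.withDensity fun p => (G p.2 : ℝ≥0∞)).map Prod.fst := by
        apply ext_of_forall_lintegral_eq_of_IsFiniteMeasure
        intro F
        have hFfst : Measurable fun p : A × B => (F p.1 : ℝ≥0∞) :=
          F.measurable_coe_ennreal_comp.comp measurable_fst
        rw [lintegral_map (F.measurable_coe_ennreal_comp) measurable_fst,
          lintegral_map (F.measurable_coe_ennreal_comp) measurable_fst,
          lintegral_withDensity_eq_lintegral_mul _ hGmeas hFfst,
          lintegral_withDensity_eq_lintegral_mul _ hGmeas hFfst]
        simp only [Pi.mul_apply]
        simp_rw [mul_comm]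
        exact base F G
      have := congrArg (fun m : Measure A => m S) hmapeq
      simp only [Measure.map_apply measurable_fst hS] at this
      rw [withDensity_apply _ (hS.preimage measurable_fst),
        withDensity_apply _ (hS.preimage measurable_fst)] at this
      simpa [← Set.prod_univ] using this
    have hβ : (μ.restrict (S ×ˢ Set.univ)).map Prod.snd
        = (ν.restrict (S ×ˢ Set.univ)).map Prod.snd := by
      haveI : IsFiniteMeasure ((μ.restrict (S ×ˢ Set.univ)).map Prod.snd) :=
        ⟨by rw [Measure.map_apply measurable_snd MeasurableSet.univ]; exact measure_lt_top _ _⟩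
      apply ext_of_forall_lintegral_eq_of_IsFiniteMeasure
      intro G
      rw [lintegral_map (G.measurable_coe_ennreal_comp) measurable_snd,
        lintegral_map (G.measurable_coe_ennreal_comp) measurable_snd]
      exact stepA G
    have := congrArg (fun m : Measure B => m T) hβ
    simp only [Measure.map_apply measurable_snd hT] at this
    rw [Measure.restrict_apply (hT.preimage measurable_snd),
      Measure.restrict_apply (hT.preimage measurable_snd)] at this
    have hset : (Prod.snd ⁻¹' T) ∩ (S ×ˢ (Set.univ : Set B)) = S ×ˢ T := by
      ext p; simp [Set.mem_prod, and_comm]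
    rwa [hset] at this
  refine ext_of_generate_finite _ generateFrom_prod.symm isPiSystem_prod ?_ ?_
  · rintro s ⟨S, hS, T, hT, rfl⟩
    exact hrect S hS T hT
  · simpa [← Set.univ_prod_univ] using
      hrect Set.univ MeasurableSet.univ Set.univ MeasurableSet.univ

lemma integral_bcf_compProd {A B : Type*}
    [MeasurableSpace A] [TopologicalSpace A] [OpensMeasurableSpace A]
    [SecondCountableTopology A]
    [MeasurableSpace B] [TopologicalSpace B] [OpensMeasurableSpace B]
    [SecondCountableTopology B]
    (ν : Measure A) [IsProbabilityMeasure ν] (κ : Kernel A B) [IsMarkovKernel κ]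
    (f : BoundedContinuousFunction A ℝ) (g : BoundedContinuousFunction B ℝ) :
    ∫ p, f p.1 * g p.2 ∂(ν ⊗ₘ κ) = ∫ t, f t * ∫ x, g x ∂(κ t) ∂ν := by
  have hH : (⇑(f.compContinuous (⟨Prod.fst, continuous_fst⟩ : C(A × B, A)) *
      g.compContinuous (⟨Prod.snd, continuous_snd⟩ : C(A × B, B))))
      = fun p : A × B => f p.1 * g p.2 := by
    ext p; simp [BoundedContinuousFunction.compContinuous_apply]
  have hint : Integrable (fun p : A × B => f p.1 * g p.2) (ν ⊗ₘ κ) := by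
    rw [← hH]; exact BoundedContinuousFunction.integrable _ _
  rw [Measure.integral_compProd hint]
  simp_rw [integral_const_mul]

/-- The bounded continuous function `t ↦ ∫ g ∂(κ t)` for a Feller Markov kernel. -/
noncomputable def intBCF {A B : Type*} [TopologicalSpace A]
    [MeasurableSpace A] [MeasurableSpace B] [TopologicalSpace B] [OpensMeasurableSpace B]
    (κ : Kernel A B) [IsMarkovKernel κ] (g : BoundedContinuousFunction B ℝ)
    (hc : Continuous fun t => ∫ x, g x ∂(κ t)) : BoundedContinuousFunction A ℝ :=
  BoundedContinuousFunction.ofNormedAddCommGroup _ hc ‖g‖ (fun t => by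
    calc ‖∫ x, g x ∂(κ t)‖ ≤ (κ t Set.univ).toReal * ‖g‖ :=
          g.norm_integral_le_mul_norm (κ t)
      _ = ‖g‖ := by simp)

@[simp] lemma intBCF_apply {A B : Type*} [TopologicalSpace A]
    [MeasurableSpace A] [MeasurableSpace B] [TopologicalSpace B] [OpensMeasurableSpace B]
    (κ : Kernel A B) [IsMarkovKernel κ] (g : BoundedContinuousFunction B ℝ)
    (hc : Continuous fun t => ∫ x, g x ∂(κ t)) (t : A) :
    intBCF κ g hc t = ∫ x, g x ∂(κ t) := rfl


section Structural

variable {X Y : ℕ → Type*} {n : ℕ}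
  [∀ i, MeasurableSpace (X i)] [∀ i, MeasurableSpace (Y i)]

/-- Restriction on pairs of prefixes. -/
def rr (m k : ℕ) (h : k ≤ m) (t : (∀ j : Fin m, X j) × (∀ j : Fin m, Y j)) :
    (∀ j : Fin k, X j) × (∀ j : Fin k, Y j) :=
  (rpi m k h t.1, rpi m k h t.2)

def uu (k : ℕ) (t : (∀ j : Fin (k + 1), X j) × (∀ j : Fin (k + 1), Y j)) :
    ((∀ j : Fin k, X j) × (∀ j : Fin k, Y j)) × X k :=
  ((restr k t.1, restr k t.2), t.1 (Fin.last k))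

def gm (k : ℕ) (t : ((∀ j : Fin k, X j) × (∀ j : Fin k, Y j)) × X k) :
    (∀ j : Fin k, Y j) × (∀ j : Fin (k + 1), X j) :=
  (t.1.2, Fin.snoc t.1.1 t.2)

def vm (k : ℕ) (t : (∀ j : Fin (k + 1), X j) × (∀ j : Fin (k + 1), Y j)) :
    ((∀ j : Fin k, Y j) × (∀ j : Fin (k + 1), X j)) × Y k :=
  ((restr k t.2, t.1), t.2 (Fin.last k))

def vinv (k : ℕ) (t : ((∀ j : Fin k, Y j) × (∀ j : Fin (k + 1), X j)) × Y k) :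
    (∀ j : Fin (k + 1), X j) × (∀ j : Fin (k + 1), Y j) :=
  (t.1.2, Fin.snoc t.1.1 t.2)

lemma measurable_rr (m k : ℕ) (h : k ≤ m) : Measurable (rr (X := X) (Y := Y) m k h) :=
  ((measurable_rpi m k h).comp measurable_fst).prodMk
    ((measurable_rpi m k h).comp measurable_snd)

lemma measurable_uu (k : ℕ) : Measurable (uu (X := X) (Y := Y) k) :=
  (((measurable_restr k).comp measurable_fst).prodMk
    ((measurable_restr k).comp measurable_snd)).prodMk
    ((measurable_pi_apply (Fin.last k)).comp measurable_fst)

lemma measurable_gm (k : ℕ) : Measurable (gm (X := X) (Y := Y) k) :=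
  (measurable_snd.comp measurable_fst).prodMk
    ((measurable_finSnoc k).comp ((measurable_fst.comp measurable_fst).prodMk measurable_snd))

lemma measurable_vm (k : ℕ) : Measurable (vm (X := X) (Y := Y) k) :=
  (((measurable_restr k).comp measurable_snd).prodMk measurable_fst).prodMk
    ((measurable_pi_apply (Fin.last k)).comp measurable_snd)

lemma measurable_vinv (k : ℕ) : Measurable (vinv (X := X) (Y := Y) k) :=
  (measurable_snd.comp measurable_fst).prodMk
    ((measurable_finSnoc k).comp ((measurable_fst.comp measurable_fst).prodMk measurable_snd))

lemma vinv_vm (k : ℕ) : vinv (X := X) (Y := Y) k ∘ vm k = id := by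
  funext t
  simp [vinv, vm, snoc_restr]

lemma gm_uu (k : ℕ) : gm (X := X) (Y := Y) k ∘ uu k = Prod.fst ∘ vm k := by
  funext t
  simp [gm, uu, vm, snoc_restr]

lemma rr_self (m : ℕ) (h : m ≤ m) : rr (X := X) (Y := Y) m m h = id := by
  funext t
  simp [rr, rpi_self]

lemma rr_succ (k : ℕ) (h : k ≤ k + 1) :
    rr (X := X) (Y := Y) (k + 1) k h = Prod.fst ∘ uu k := by
  funext t
  simp [rr, uu, rpi_succ]

lemma rr_trans {m k l : ℕ} (h1 : l ≤ k) (h2 : k ≤ m) :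
    rr (X := X) (Y := Y) k l h1 ∘ rr m k h2 = rr m l (h1.trans h2) := by
  funext t
  simp [rr, rpi_trans]

lemma jointAux_succ (P : FeedbackFamily X Y n) (Q : ForwardFamily X Y n) (k : ℕ)
    (h : k + 1 ≤ n + 1) :
    jointAux P Q (k + 1) h =
      ((((jointAux P Q k (Nat.le_of_succ_le h)) ⊗ₘ (P.p ⟨k, h⟩)).map (gm k))
        ⊗ₘ (Q.q ⟨k, h⟩)).map (vinv k) := rfl

lemma isProbabilityMeasure_jointAux (P : FeedbackFamily X Y n) (Q : ForwardFamily X Y n) :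
    ∀ (k : ℕ) (h : k ≤ n + 1), IsProbabilityMeasure (jointAux P Q k h) := by
  intro k
  induction k with
  | zero => intro h; rw [show jointAux P Q 0 h = Measure.dirac default from rfl]; infer_instance
  | succ k ih =>
    intro h
    haveI := ih (Nat.le_of_succ_le h)
    haveI := P.markov ⟨k, h⟩
    haveI := Q.markov ⟨k, h⟩
    rw [jointAux_succ]
    haveI : IsProbabilityMeasure
        ((jointAux P Q k (Nat.le_of_succ_le h) ⊗ₘ P.p ⟨k, h⟩).map (gm k)) :=
      Measure.isProbabilityMeasure_map (measurable_gm k).aemeasurable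
    exact Measure.isProbabilityMeasure_map (measurable_vinv k).aemeasurable

lemma jointAux_map_uu (P : FeedbackFamily X Y n) (Q : ForwardFamily X Y n) (k : ℕ)
    (h : k + 1 ≤ n + 1) :
    (jointAux P Q (k + 1) h).map (uu k)
      = (jointAux P Q k (Nat.le_of_succ_le h)) ⊗ₘ (P.p ⟨k, h⟩) := by
  haveI := P.markov ⟨k, h⟩
  haveI := Q.markov ⟨k, h⟩
  haveI := isProbabilityMeasure_jointAux P Q k (Nat.le_of_succ_le h)
  haveI : IsProbabilityMeasure
      ((jointAux P Q k (Nat.le_of_succ_le h) ⊗ₘ P.p ⟨k, h⟩).map (gm k)) :=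
    Measure.isProbabilityMeasure_map (measurable_gm k).aemeasurable
  rw [jointAux_succ, Measure.map_map (measurable_uu k) (measurable_vinv k)]
  have hcomp : uu (X := X) (Y := Y) k ∘ vinv k =
      (fun s : (∀ j : Fin k, Y j) × (∀ j : Fin (k + 1), X j) =>
        ((restr k s.2, s.1), s.2 (Fin.last k))) ∘ Prod.fst := by
    funext t
    simp [uu, vinv, restr_snoc]
  have h2m : Measurable (fun s : (∀ j : Fin k, Y j) × (∀ j : Fin (k + 1), X j) =>
      ((restr k s.2, s.1), s.2 (Fin.last k))) :=
    (((measurable_restr k).comp measurable_snd).prodMk measurable_fst).prodMk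
      ((measurable_pi_apply (Fin.last k)).comp measurable_snd)
  rw [hcomp, ← Measure.map_map h2m measurable_fst,
    show (((jointAux P Q k (Nat.le_of_succ_le h)) ⊗ₘ (P.p ⟨k, h⟩)).map (gm k)
        ⊗ₘ (Q.q ⟨k, h⟩)).map Prod.fst
      = ((jointAux P Q k (Nat.le_of_succ_le h)) ⊗ₘ (P.p ⟨k, h⟩)).map (gm k) from
      Measure.fst_compProd _ _,
    Measure.map_map h2m (measurable_gm k)]
  have hid : (fun s : (∀ j : Fin k, Y j) × (∀ j : Fin (k + 1), X j) =>
      ((restr k s.2, s.1), s.2 (Fin.last k))) ∘ gm (X := X) (Y := Y) k = id := by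
    funext t
    simp [gm, restr_snoc]
  rw [hid, Measure.map_id]

lemma jointAux_map_rr (P : FeedbackFamily X Y n) (Q : ForwardFamily X Y n) :
    ∀ (m : ℕ) (hm : m ≤ n + 1) (k : ℕ) (hk : k ≤ m),
      (jointAux P Q m hm).map (rr m k hk) = jointAux P Q k (hk.trans hm) := by
  intro m
  induction m with
  | zero =>
    intro hm k hk
    have : k = 0 := Nat.le_zero.mp hk
    subst this
    rw [rr_self, Measure.map_id]
  | succ m ih =>
    intro hm k hk
    rcases Nat.eq_or_lt_of_le hk with rfl | hk'
    · rw [rr_self, Measure.map_id]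
    · have hkm : k ≤ m := Nat.lt_succ_iff.mp hk'
      rw [← rr_trans hkm (Nat.le_succ m), ← Measure.map_map (measurable_rr m k hkm)
        (measurable_rr (m + 1) m (Nat.le_succ m)), rr_succ,
        ← Measure.map_map measurable_fst (measurable_uu m), jointAux_map_uu,
        show ((jointAux P Q m (Nat.le_of_succ_le hm)) ⊗ₘ (P.p ⟨m, hm⟩)).map Prod.fst
          = jointAux P Q m (Nat.le_of_succ_le hm) from
          haveI := P.markov ⟨m, hm⟩
          haveI := isProbabilityMeasure_jointAux P Q m (Nat.le_of_succ_le hm)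
          Measure.fst_compProd _ _,
        ih (Nat.le_of_succ_le hm) k hkm]

end Structural

section KeyLemmas

variable {X Y : ℕ → Type*} {n : ℕ}
  [∀ i, TopologicalSpace (X i)] [∀ i, MeasurableSpace (X i)] [∀ i, BorelSpace (X i)]
  [∀ i, PolishSpace (X i)]
  [∀ i, TopologicalSpace (Y i)] [∀ i, MeasurableSpace (Y i)] [∀ i, BorelSpace (Y i)]
  [∀ i, PolishSpace (Y i)]

lemma continuous_rr (m k : ℕ) (h : k ≤ m) : Continuous (rr (X := X) (Y := Y) m k h) :=
  ((continuous_rpi m k h).comp continuous_fst).prodMk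
    ((continuous_rpi m k h).comp continuous_snd)

lemma continuous_uu (k : ℕ) : Continuous (uu (X := X) (Y := Y) k) :=
  (((continuous_restr k).comp continuous_fst).prodMk
    ((continuous_restr k).comp continuous_snd)).prodMk
    ((continuous_apply (Fin.last k)).comp continuous_fst)

lemma tendsto_integral_map_joint (P : FeedbackFamily X Y n) (Q : ℕ → ForwardFamily X Y n)
    (π0 : Measure ((∀ j : Fin (n + 1), X j) × (∀ j : Fin (n + 1), Y j)))
    (hconv : WeakTendsto (fun α => joint P (Q α)) π0)
    {Z : Type*} [MeasurableSpace Z] [TopologicalSpace Z] [OpensMeasurableSpace Z]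
    (φ : (∀ j : Fin (n + 1), X j) × (∀ j : Fin (n + 1), Y j) → Z)
    (hφm : Measurable φ) (hφc : Continuous φ) (H : BoundedContinuousFunction Z ℝ) :
    Tendsto (fun α => ∫ z, H z ∂((joint P (Q α)).map φ)) atTop
      (nhds (∫ z, H z ∂(π0.map φ))) := by
  have h1 : ∀ μ : Measure ((∀ j : Fin (n + 1), X j) × (∀ j : Fin (n + 1), Y j)),
      ∫ z, H z ∂(μ.map φ) = ∫ w, (H.compContinuous ⟨φ, hφc⟩) w ∂μ := by
    intro μ
    rw [integral_map hφm.aemeasurable H.continuous.measurable.aestronglyMeasurable]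
    rfl
  simp_rw [h1]
  exact hconv _

lemma key_step (P : FeedbackFamily X Y n) (hCA : CondCA P)
    (Q : ℕ → ForwardFamily X Y n)
    (π0 : Measure ((∀ j : Fin (n + 1), X j) × (∀ j : Fin (n + 1), Y j)))
    (hπ0 : IsProbabilityMeasure π0)
    (hconv : WeakTendsto (fun α => joint P (Q α)) π0)
    (k : ℕ) (hk : k < n + 1) :
    π0.map (uu k ∘ rr (n + 1) (k + 1) hk)
      = (π0.map (rr (n + 1) k (Nat.le_of_succ_le hk))) ⊗ₘ P.p ⟨k, hk⟩ := by
  haveI := P.markov ⟨k, hk⟩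
  haveI I1 : IsProbabilityMeasure (π0.map (uu k ∘ rr (n + 1) (k + 1) hk)) :=
    Measure.isProbabilityMeasure_map ((measurable_uu k).comp (measurable_rr _ _ _)).aemeasurable
  haveI I2 : IsProbabilityMeasure (π0.map (rr (n + 1) k (Nat.le_of_succ_le hk))) :=
    Measure.isProbabilityMeasure_map (measurable_rr _ _ _).aemeasurable
  apply ext_prod_bcf
  intro f g
  have hc : Continuous fun t : (∀ j : Fin k, X j) × (∀ j : Fin k, Y j) =>
      ∫ x, g x ∂(P.p ⟨k, hk⟩ t) := hCA ⟨k, hk⟩ g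
  set G := intBCF (P.p ⟨k, hk⟩) g hc with hG
  set H := f.compContinuous
      (⟨Prod.fst, continuous_fst⟩ :
        C(((∀ j : Fin k, X j) × (∀ j : Fin k, Y j)) × X k, (∀ j : Fin k, X j) × (∀ j : Fin k, Y j)))
    * g.compContinuous
      (⟨Prod.snd, continuous_snd⟩ :
        C(((∀ j : Fin k, X j) × (∀ j : Fin k, Y j)) × X k, X k)) with hH
  have hHcoe : ∀ p, H p = f p.1 * g p.2 := fun p => by
    simp [hH, BoundedContinuousFunction.compContinuous_apply]
  have hfG : ∀ (μ : Measure ((∀ j : Fin k, X j) × (∀ j : Fin k, Y j))),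
      IsProbabilityMeasure μ →
      ∫ p, f p.1 * g p.2 ∂(μ ⊗ₘ P.p ⟨k, hk⟩) = ∫ z, (f * G) z ∂μ := by
    intro μ hμ
    rw [integral_bcf_compProd μ (P.p ⟨k, hk⟩) f g]
    apply integral_congr_ae
    filter_upwards with t
    simp [hG]
  have t1 := tendsto_integral_map_joint P Q π0 hconv (uu k ∘ rr (n + 1) (k + 1) hk)
    ((measurable_uu k).comp (measurable_rr (n + 1) (k + 1) hk))
    ((continuous_uu k).comp (continuous_rr (n + 1) (k + 1) hk)) H
  have t2 := tendsto_integral_map_joint P Q π0 hconv (rr (n + 1) k (Nat.le_of_succ_le hk))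
    (measurable_rr (n + 1) k (Nat.le_of_succ_le hk))
    (continuous_rr (n + 1) k (Nat.le_of_succ_le hk)) (f * G)
  have hα : ∀ α, ∫ z, H z ∂((joint P (Q α)).map (uu k ∘ rr (n + 1) (k + 1) hk))
      = ∫ z, (f * G) z ∂((joint P (Q α)).map (rr (n + 1) k (Nat.le_of_succ_le hk))) := by
    intro α
    have m1 : (joint P (Q α)).map (uu k ∘ rr (n + 1) (k + 1) hk)
        = jointAux P (Q α) k (Nat.le_of_succ_le hk) ⊗ₘ P.p ⟨k, hk⟩ := by
      rw [← Measure.map_map (measurable_uu k) (measurable_rr _ _ _)]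
      rw [show (joint P (Q α)).map (rr (n + 1) (k + 1) hk) = jointAux P (Q α) (k + 1) hk from
        jointAux_map_rr P (Q α) (n + 1) le_rfl (k + 1) hk]
      exact jointAux_map_uu P (Q α) k hk
    have m2 : (joint P (Q α)).map (rr (n + 1) k (Nat.le_of_succ_le hk))
        = jointAux P (Q α) k (Nat.le_of_succ_le hk) :=
      jointAux_map_rr P (Q α) (n + 1) le_rfl k (Nat.le_of_succ_le hk)
    haveI := isProbabilityMeasure_jointAux P (Q α) k (Nat.le_of_succ_le hk)
    rw [m1, m2, ← hfG _ inferInstance]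
    apply integral_congr_ae
    filter_upwards with p
    exact hHcoe p
  have t1' : Tendsto (fun α => ∫ z, H z ∂((joint P (Q α)).map (uu k ∘ rr (n + 1) (k + 1) hk)))
      atTop (nhds (∫ z, (f * G) z ∂(π0.map (rr (n + 1) k (Nat.le_of_succ_le hk))))) := by
    refine Tendsto.congr (fun α => (hα α).symm) t2
  have huniq : ∫ z, H z ∂(π0.map (uu k ∘ rr (n + 1) (k + 1) hk))
      = ∫ z, (f * G) z ∂(π0.map (rr (n + 1) k (Nat.le_of_succ_le hk))) :=
    tendsto_nhds_unique t1 t1'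
  calc ∫ p, f p.1 * g p.2 ∂(π0.map (uu k ∘ rr (n + 1) (k + 1) hk))
      = ∫ z, H z ∂(π0.map (uu k ∘ rr (n + 1) (k + 1) hk)) := by
        apply integral_congr_ae
        filter_upwards with p
        exact (hHcoe p).symm
    _ = ∫ z, (f * G) z ∂(π0.map (rr (n + 1) k (Nat.le_of_succ_le hk))) := huniq
    _ = ∫ p, f p.1 * g p.2
          ∂((π0.map (rr (n + 1) k (Nat.le_of_succ_le hk))) ⊗ₘ P.p ⟨k, hk⟩) :=
        (hfG _ I2).symm

end KeyLemmas

section Statements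

variable {X Y : ℕ → Type*} {n : ℕ}
  [∀ i, TopologicalSpace (X i)] [∀ i, MeasurableSpace (X i)] [∀ i, BorelSpace (X i)]
  [∀ i, PolishSpace (X i)]
  [∀ i, TopologicalSpace (Y i)] [∀ i, MeasurableSpace (Y i)] [∀ i, BorelSpace (Y i)]
  [∀ i, PolishSpace (Y i)]

/-- If the `Y_i` are compact Polish, the `X_i` Polish, the feedback
family `P` satisfies (CA), and the joint measures `←P ⊗ →Q^α` converge weakly to a
probability measure `π⁰`, then `π⁰ = ←P ⊗ →Q⁰` for some forward family `Q⁰`; in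
particular the limiting joint measure has the same feedback family `P`. -/
theorem weak_limit_has_same_feedback_family [∀ i, CompactSpace (Y i)]
    (P : FeedbackFamily X Y n) (hCA : CondCA P)
    (Q : ℕ → ForwardFamily X Y n)
    (π0 : Measure ((∀ j : Fin (n + 1), X j) × (∀ j : Fin (n + 1), Y j)))
    (hπ0 : IsProbabilityMeasure π0)
    (hconv : WeakTendsto (fun α => joint P (Q α)) π0) :
    ∃ Q0 : ForwardFamily X Y n, π0 = joint P Q0 := by
  -- nonemptiness of the spaces `Y i`
  have hne : Nonempty ((∀ j : Fin (n + 1), X j) × (∀ j : Fin (n + 1), Y j)) := by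
    by_contra hempty
    rw [not_nonempty_iff] at hempty
    have h1 := hπ0.measure_univ
    rw [π0.eq_zero_of_isEmpty] at h1
    simp at h1
  have hYne : ∀ i : Fin (n + 1), Nonempty (Y (i : ℕ)) := fun i => ⟨hne.some.2 i⟩
  have hρprob : ∀ (k : ℕ) (hk : k < n + 1),
      IsProbabilityMeasure (π0.map (vm k ∘ rr (n + 1) (k + 1) hk)) := fun k hk =>
    Measure.isProbabilityMeasure_map ((measurable_vm k).comp (measurable_rr _ _ _)).aemeasurable
  let Q0 : ForwardFamily X Y n :=
    { q := fun i =>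
        letI := hYne i
        letI : IsProbabilityMeasure (π0.map (vm (i : ℕ) ∘ rr (n + 1) ((i : ℕ) + 1) i.isLt)) :=
          hρprob (i : ℕ) i.isLt
        (π0.map (vm (i : ℕ) ∘ rr (n + 1) ((i : ℕ) + 1) i.isLt)).condKernel
      markov := fun i => by
        letI := hYne i
        letI : IsProbabilityMeasure (π0.map (vm (i : ℕ) ∘ rr (n + 1) ((i : ℕ) + 1) i.isLt)) :=
          hρprob (i : ℕ) i.isLt
        exact (π0.map (vm (i : ℕ) ∘ rr (n + 1) ((i : ℕ) + 1) i.isLt)).instIsMarkovKernelCondKernel }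
  refine ⟨Q0, ?_⟩
  have main : ∀ (k : ℕ) (hk : k ≤ n + 1), π0.map (rr (n + 1) k hk) = jointAux P Q0 k hk := by
    intro k
    induction k with
    | zero =>
      intro hk
      haveI : IsProbabilityMeasure (π0.map (rr (n + 1) 0 hk)) :=
        Measure.isProbabilityMeasure_map (measurable_rr _ _ _).aemeasurable
      haveI := isProbabilityMeasure_jointAux P Q0 0 hk
      haveI : Subsingleton ((∀ j : Fin 0, X j) × (∀ j : Fin 0, Y j)) := by
        constructor
        rintro ⟨a1, a2⟩ ⟨b1, b2⟩
        have h1 : a1 = b1 := funext fun j => j.elim0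
        have h2 : a2 = b2 := funext fun j => j.elim0
        rw [h1, h2]
      exact measure_eq_of_subsingleton _ _ (by rw [measure_univ, measure_univ])
    | succ k ih =>
      intro hk
      have hk' : k < n + 1 := hk
      letI := hYne ⟨k, hk'⟩
      haveI := hρprob k hk'
      haveI := P.markov ⟨k, hk'⟩
      have e1 : π0.map (rr (n + 1) (k + 1) hk)
          = (π0.map (vm k ∘ rr (n + 1) (k + 1) hk)).map (vinv k) := by
        rw [Measure.map_map (measurable_vinv k)
          ((measurable_vm k).comp (measurable_rr _ _ _))]
        have hcmp : vinv (X := X) (Y := Y) k ∘ (vm k ∘ rr (n + 1) (k + 1) hk)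
            = rr (n + 1) (k + 1) hk := by
          rw [← Function.comp_assoc, vinv_vm, Function.id_comp]
        rw [hcmp]
      have e2 : π0.map (vm k ∘ rr (n + 1) (k + 1) hk)
          = (π0.map (vm k ∘ rr (n + 1) (k + 1) hk)).fst ⊗ₘ Q0.q ⟨k, hk'⟩ :=
        ((π0.map (vm k ∘ rr (n + 1) (k + 1) hk)).disintegrate (π0.map (vm k ∘ rr (n + 1) (k + 1) hk)).condKernel).symm
      have e3 : (π0.map (vm k ∘ rr (n + 1) (k + 1) hk)).fst
          = (π0.map (uu k ∘ rr (n + 1) (k + 1) hk)).map (gm k) := by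
        show (π0.map (vm k ∘ rr (n + 1) (k + 1) hk)).map Prod.fst = _
        rw [Measure.map_map measurable_fst ((measurable_vm k).comp (measurable_rr _ _ _)),
          Measure.map_map (measurable_gm k) ((measurable_uu k).comp (measurable_rr _ _ _))]
        have hcmp : Prod.fst ∘ (vm (X := X) (Y := Y) k ∘ rr (n + 1) (k + 1) hk)
            = gm k ∘ (uu k ∘ rr (n + 1) (k + 1) hk) := by
          rw [← Function.comp_assoc, ← Function.comp_assoc, gm_uu]
        rw [hcmp]
      have e4 := key_step P hCA Q π0 hπ0 hconv k hk'
      rw [e1, e2, e3, e4, ih (Nat.le_of_succ_le hk), jointAux_succ P Q0 k hk]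
  have hfinal := main (n + 1) le_rfl
  rw [rr_self, Measure.map_id] at hfinal
  exact hfinal


end Statements

end PaperDI
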